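/- Let A ∈ ℝ^{m×n} have nonzero columns a_1,…,a_n and full row rank rk(A) = m. Let 0 < ε ≤ 1/(11m) and let v ∈ ℝ^m with ‖v‖ = 1 satisfy â_jᵀv ≥ −ε for all j ∈ [n]. Let A' = (I_m + vvᵀ)A. Then the m-dimensional Lebesgue volume satisfies vol(P_{A'}) ≥ (3/2)·vol(P_A). -/

import Mathlib

open Matrix Set MeasureTheory Pointwise ENNReal

noncomputable section

/-- Euclidean dot product on `Fin d → ℝ`. -/
def dotp {d : ℕ} (u v : Fin d → ℝ) : ℝ := ∑ i, u i * v i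

/-- Euclidean norm on `Fin d → ℝ`. -/
def norm2 {d : ℕ} (v : Fin d → ℝ) : ℝ := Real.sqrt (∑ i, v i ^ 2)

/-- Normalization `v / ‖v‖`, with the convention that `0` is mapped to `0`. -/
def nml {d : ℕ} (v : Fin d → ℝ) : Fin d → ℝ := (norm2 v)⁻¹ • v

/-- The `j`-th column of a matrix. -/
def mcol {d : ℕ} {ι : Type} (A : Matrix (Fin d) ι ℝ) (j : ι) : Fin d → ℝ := fun i => A i j

/-- Goffin's condition measure `ρ_A = max_{y ∈ im(A) \ {0}} min_j â_jᵀ ŷ`. -/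
def goffin {d : ℕ} {ι : Type} [Fintype ι] (A : Matrix (Fin d) ι ℝ) : ℝ :=
  sSup { r : ℝ | ∃ y : Fin d → ℝ, (∃ x : ι → ℝ, A.mulVec x = y) ∧ y ≠ 0 ∧
    r = ⨅ j : ι, dotp (nml (mcol A j)) (nml y) }

/-- The cone `Σ_A = {y : Aᵀ y ≥ 0}`. -/
def SigmaCone {d : ℕ} {ι : Type} (A : Matrix (Fin d) ι ℝ) : Set (Fin d → ℝ) :=
  { y | ∀ j, 0 ≤ dotp (mcol A j) y }

/-- `F_A = Σ_A ∩ B^d`. -/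
def FA {d : ℕ} {ι : Type} (A : Matrix (Fin d) ι ℝ) : Set (Fin d → ℝ) :=
  SigmaCone A ∩ { z | norm2 z ≤ 1 }

/-- `‖v‖_M = √(vᵀ M v)`. -/
def qnorm {d : ℕ} (M : Matrix (Fin d) (Fin d) ℝ) (v : Fin d → ℝ) : ℝ :=
  Real.sqrt (dotp v (M.mulVec v))

/-- The ellipsoid `E(M) = {z : ‖z‖_M ≤ 1}`. -/
def ell {d : ℕ} (M : Matrix (Fin d) (Fin d) ℝ) : Set (Fin d → ℝ) :=
  { z | qnorm M z ≤ 1 }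

/-- The width of a set `X` along `a`: `sup {aᵀz : z ∈ X}`. -/
def widthOf {d : ℕ} (X : Set (Fin d → ℝ)) (a : Fin d → ℝ) : ℝ :=
  sSup { r : ℝ | ∃ z ∈ X, r = dotp a z }

/-- `P_A = conv(â_1,…,â_n) ∩ (−conv(â_1,…,â_n))`. -/
def PA {d : ℕ} {ι : Type} (A : Matrix (Fin d) ι ℝ) : Set (Fin d → ℝ) :=
  convexHull ℝ (Set.range fun j => nml (mcol A j)) ∩
    (-(convexHull ℝ (Set.range fun j => nml (mcol A j))))

/-- `Δ_A`: maximum of `∏_{j ∈ B} ‖a_j‖` over sets `B` of linearly independent columns. -/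
def DeltaA {d n : ℕ} (A : Matrix (Fin d) (Fin n) ℝ) : ℝ :=
  sSup { p : ℝ | ∃ B : Finset (Fin n),
    LinearIndependent ℝ (fun j : {x // x ∈ B} => mcol A j.1) ∧ p = ∏ j ∈ B, norm2 (mcol A j) }

/-- `T*_A`: indices `i` such that some `y` with `Aᵀy ≥ 0` has `a_iᵀ y > 0`. -/
def TstarA {d : ℕ} {ι : Type} (A : Matrix (Fin d) ι ℝ) : Set ι :=
  { i | ∃ y : Fin d → ℝ, (∀ j, 0 ≤ dotp (mcol A j) y) ∧ 0 < dotp (mcol A i) y }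

/-- `S*_A`: indices `i` such that some `x ≥ 0` with `Ax = 0` has `x_i > 0`. -/
def SstarA {d : ℕ} {ι : Type} [Fintype ι] (A : Matrix (Fin d) ι ℝ) : Set ι :=
  { i | ∃ x : ι → ℝ, (∀ j, 0 ≤ x j) ∧ A.mulVec x = 0 ∧ 0 < x i }

/-- `ω_A = min_{i ∈ T*_A} width_{F_A}(â_i)`. -/
def omegaA {d : ℕ} {ι : Type} (A : Matrix (Fin d) ι ℝ) : ℝ :=
  sInf ((fun i => widthOf (FA A) (nml (mcol A i))) '' TstarA A)

namespace RescaleAux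

variable {d : ℕ}

lemma dotp_comm (u w : Fin d → ℝ) : dotp u w = dotp w u := by
  simp [dotp, mul_comm]

lemma dotp_add_left (a b c : Fin d → ℝ) : dotp (a + b) c = dotp a c + dotp b c := by
  simp [dotp, add_mul, Finset.sum_add_distrib]

lemma dotp_add_right (a b c : Fin d → ℝ) : dotp a (b + c) = dotp a b + dotp a c := by
  simp [dotp, mul_add, Finset.sum_add_distrib]

lemma dotp_smul_left (r : ℝ) (a c : Fin d → ℝ) : dotp (r • a) c = r * dotp a c := by
  simp only [dotp, Pi.smul_apply, smul_eq_mul, Finset.mul_sum]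
  exact Finset.sum_congr rfl fun i _ => by ring

lemma dotp_smul_right (r : ℝ) (a c : Fin d → ℝ) : dotp a (r • c) = r * dotp a c := by
  simp only [dotp, Pi.smul_apply, smul_eq_mul, Finset.mul_sum]
  exact Finset.sum_congr rfl fun i _ => by ring

lemma dotp_neg_right (a c : Fin d → ℝ) : dotp a (-c) = - dotp a c := by
  simp [dotp, Finset.sum_neg_distrib]

lemma dotp_sum_right {ι : Type*} [Fintype ι] (u : Fin d → ℝ) (f : ι → Fin d → ℝ) :
    dotp u (∑ i, f i) = ∑ i, dotp u (f i) := by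
  simp only [dotp, Finset.sum_apply, Finset.mul_sum]
  exact Finset.sum_comm

lemma dotp_self_eq (w : Fin d → ℝ) : dotp w w = ∑ i, w i ^ 2 := by
  simp [dotp, sq]

lemma dotp_self_nonneg (w : Fin d → ℝ) : 0 ≤ dotp w w := by
  rw [dotp_self_eq]; exact Finset.sum_nonneg fun i _ => sq_nonneg _

lemma norm2_eq_sqrt (w : Fin d → ℝ) : norm2 w = Real.sqrt (dotp w w) := by
  rw [norm2, dotp_self_eq]

lemma norm2_nonneg (w : Fin d → ℝ) : 0 ≤ norm2 w := Real.sqrt_nonneg _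

lemma sq_norm2 (w : Fin d → ℝ) : (norm2 w) ^ 2 = dotp w w := by
  rw [norm2_eq_sqrt, Real.sq_sqrt (dotp_self_nonneg w)]

lemma dotp_self_eq_zero {w : Fin d → ℝ} (h : dotp w w = 0) : w = 0 := by
  rw [dotp_self_eq] at h
  funext i
  have := (Finset.sum_eq_zero_iff_of_nonneg (fun i _ => sq_nonneg (w i))).1 h i (Finset.mem_univ i)
  exact pow_eq_zero_iff (n := 2) (by norm_num) |>.1 this

lemma norm2_pos {w : Fin d → ℝ} (h : w ≠ 0) : 0 < norm2 w := by
  rw [norm2_eq_sqrt]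
  apply Real.sqrt_pos.2
  rcases lt_or_eq_of_le (dotp_self_nonneg w) with h' | h'
  · exact h'
  · exact absurd (dotp_self_eq_zero h'.symm) h

lemma norm2_smul (c : ℝ) (w : Fin d → ℝ) : norm2 (c • w) = |c| * norm2 w := by
  rw [norm2_eq_sqrt, norm2_eq_sqrt, dotp_smul_left, dotp_smul_right, ← mul_assoc,
    Real.sqrt_mul (mul_self_nonneg c), Real.sqrt_mul_self_eq_abs]

lemma nml_smul {c : ℝ} (hc : 0 < c) (w : Fin d → ℝ) : nml (c • w) = nml w := by
  rcases eq_or_ne w 0 with rfl | hw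
  · simp [nml]
  · have h1 : norm2 w ≠ 0 := ne_of_gt (norm2_pos hw)
    rw [nml, nml, norm2_smul, abs_of_pos hc, smul_smul]
    congr 1
    field_simp

lemma nml_ne_zero {w : Fin d → ℝ} (h : w ≠ 0) : nml w ≠ 0 := by
  rw [nml]
  intro hc
  have h1 : (norm2 w)⁻¹ ≠ 0 := inv_ne_zero (ne_of_gt (norm2_pos h))
  exact h (by simpa [h1] using smul_eq_zero.1 hc)

lemma eq_norm2_smul_nml {w : Fin d → ℝ} (h : w ≠ 0) : w = norm2 w • nml w := by
  rw [nml, smul_smul, mul_inv_cancel₀ (ne_of_gt (norm2_pos h)), one_smul]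

lemma dotp_nml_self {w : Fin d → ℝ} (h : w ≠ 0) : dotp (nml w) (nml w) = 1 := by
  rw [nml, dotp_smul_left, dotp_smul_right, ← mul_assoc, ← mul_inv, ← sq_norm2]
  have := norm2_pos h
  field_simp

lemma cauchy_schwarz (u w : Fin d → ℝ) : (dotp u w) ^ 2 ≤ dotp u u * dotp w w := by
  rw [dotp_self_eq, dotp_self_eq]
  exact Finset.sum_mul_sq_le_sq_mul_sq Finset.univ u w

/-- Extraction of a convex combination from membership in the hull of a range. -/
lemma exists_combo {m n : ℕ} {p : Fin n → (Fin m → ℝ)} {x : Fin m → ℝ}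
    (hx : x ∈ convexHull ℝ (Set.range p)) :
    ∃ (ι : Type) (_ : Fintype ι) (w : ι → ℝ) (j : ι → Fin n),
      (∀ i, 0 ≤ w i) ∧ ∑ i, w i = 1 ∧ ∑ i, w i • p (j i) = x := by
  obtain ⟨ι, hι, w, z, hw0, hw1, hz, hxeq⟩ := mem_convexHull_iff_exists_fintype.1 hx
  choose j hj using hz
  exact ⟨ι, hι, w, j, hw0, hw1, by
    rw [← hxeq]; exact Finset.sum_congr rfl fun i _ => by rw [hj]⟩

/-- If `0` is in the hull of the `p j` and `M p j = λ j • q j` with `λ j ≥ 1`, then `0` is in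
the hull of the `q j`. -/
lemma zero_mem_q {m n : ℕ} {M : Matrix (Fin m) (Fin m) ℝ}
    {p q : Fin n → (Fin m → ℝ)} {lam : Fin n → ℝ}
    (hMp : ∀ j, M.mulVec (p j) = lam j • q j)
    (hlam1 : ∀ j, 1 ≤ lam j)
    (h0 : (0 : Fin m → ℝ) ∈ convexHull ℝ (Set.range p)) :
    (0 : Fin m → ℝ) ∈ convexHull ℝ (Set.range q) := by
  obtain ⟨ι, hι, w, j, hw0, hw1, hcomb⟩ := exists_combo h0
  set S : ℝ := ∑ i, w i * lam (j i) with hS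
  have hS1 : 1 ≤ S := by
    rw [← hw1, hS]
    exact Finset.sum_le_sum fun i _ => le_mul_of_one_le_right (hw0 i) (hlam1 (j i))
  have hS0 : S ≠ 0 := by linarith
  have hMx : ∑ i, (w i * lam (j i)) • q (j i) = 0 := by
    have := congrArg (M.mulVecLin) hcomb
    rw [map_sum, map_zero] at this
    rw [← this]
    refine Finset.sum_congr rfl fun i _ => ?_
    rw [Matrix.mulVecLin_apply, Matrix.mulVec_smul, hMp, smul_smul]
  refine mem_convexHull_of_exists_fintype (fun i => (w i * lam (j i)) / S) (fun i => q (j i))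
    (fun i => div_nonneg (mul_nonneg (hw0 i) (by linarith [hlam1 (j i)])) (by linarith)) ?_
    (fun i => Set.mem_range_self _) ?_
  · rw [← Finset.sum_div, ← hS, div_self hS0]
  · have : ∑ i, ((w i * lam (j i)) / S) • q (j i) = S⁻¹ • ∑ i, (w i * lam (j i)) • q (j i) := by
      rw [Finset.smul_sum]
      exact Finset.sum_congr rfl fun i _ => by rw [smul_smul, div_eq_inv_mul]
    rw [this, hMx, smul_zero]

/-- Core membership lemma. -/
lemma core_mem {m n : ℕ} {ε : ℝ} (hε : 0 < ε) {M : Matrix (Fin m) (Fin m) ℝ} {v : Fin m → ℝ}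
    {p q : Fin n → (Fin m → ℝ)} {lam : Fin n → ℝ}
    (hMp : ∀ j, M.mulVec (p j) = lam j • q j)
    (hlam0 : ∀ j, 0 ≤ lam j)
    (hlamle : ∀ j, lam j ≤ 1 + |dotp v (p j)|)
    (ht : ∀ j, -ε ≤ dotp v (p j))
    (hzero : (0 : Fin m → ℝ) ∈ convexHull ℝ (Set.range q))
    {x : Fin m → ℝ} (hx : x ∈ convexHull ℝ (Set.range p))
    (hxv : dotp v x ≤ ε) :
    (1 + 3 * ε)⁻¹ • M.mulVec x ∈ convexHull ℝ (Set.range q) := by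
  obtain ⟨ι, hι, w, j, hw0, hw1, hcomb⟩ := exists_combo hx
  have hc : (0 : ℝ) < 1 + 3 * ε := by linarith
  set S : ℝ := ∑ i, w i * lam (j i) with hSdef
  have hdvx : dotp v x = ∑ i, w i * dotp v (p (j i)) := by
    rw [← hcomb, dotp_sum_right]
    exact Finset.sum_congr rfl fun i _ => dotp_smul_right _ _ _
  have habs : ∀ i, |dotp v (p (j i))| ≤ dotp v (p (j i)) + 2 * ε := by
    intro i
    rcases abs_cases (dotp v (p (j i))) with ⟨h1, h2⟩ | ⟨h1, h2⟩ <;>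
      [linarith; (have := ht (j i); linarith)]
  have hS : S ≤ 1 + 3 * ε := by
    calc S ≤ ∑ i, w i * (1 + (dotp v (p (j i)) + 2 * ε)) := by
          refine Finset.sum_le_sum fun i _ => mul_le_mul_of_nonneg_left ?_ (hw0 i)
          have := habs i; have := hlamle (j i); linarith
      _ = (∑ i, w i) + ((∑ i, w i * dotp v (p (j i))) + (∑ i, w i) * (2 * ε)) := by
          rw [Finset.sum_mul, ← Finset.sum_add_distrib, ← Finset.sum_add_distrib]
          exact Finset.sum_congr rfl fun i _ => by ring
      _ ≤ 1 + 3 * ε := by rw [hw1, ← hdvx]; linarith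
  have hS0 : 0 ≤ S :=
    Finset.sum_nonneg fun i _ => mul_nonneg (hw0 i) (hlam0 (j i))
  have hMx : M.mulVec x = ∑ i, (w i * lam (j i)) • q (j i) := by
    have := congrArg (M.mulVecLin) hcomb
    rw [map_sum] at this
    rw [show M.mulVec x = M.mulVecLin x from rfl, ← this]
    refine Finset.sum_congr rfl fun i _ => ?_
    rw [Matrix.mulVecLin_apply, Matrix.mulVec_smul, hMp, smul_smul]
  -- the convex combination over `Option ι`
  have key := mem_convexHull_of_exists_fintype (R := ℝ) (s := convexHull ℝ (Set.range q))
    (x := (1 + 3 * ε)⁻¹ • M.mulVec x)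
    (fun o : Option ι => o.elim (1 - (1 + 3 * ε)⁻¹ * S) (fun i => (1 + 3 * ε)⁻¹ * (w i * lam (j i))))
    (fun o : Option ι => o.elim 0 (fun i => q (j i)))
    (fun o => by
      cases o with
      | none =>
          have : (1 + 3 * ε)⁻¹ * S ≤ (1 + 3 * ε)⁻¹ * (1 + 3 * ε) :=
            mul_le_mul_of_nonneg_left hS (by positivity)
          rw [inv_mul_cancel₀ (ne_of_gt hc)] at this
          simpa using by linarith
      | some i =>
          exact mul_nonneg (by positivity) (mul_nonneg (hw0 i) (hlam0 (j i))))
    (by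
      rw [Fintype.sum_option]
      simp only [Option.elim_none, Option.elim_some]
      rw [← Finset.mul_sum, ← hSdef]; ring)
    (fun o => by
      cases o with
      | none => exact hzero
      | some i => exact subset_convexHull ℝ _ (Set.mem_range_self (j i)))
    (by
      rw [Fintype.sum_option]
      simp only [Option.elim_none, Option.elim_some, smul_zero, zero_add]
      rw [hMx, Finset.smul_sum]
      exact Finset.sum_congr rfl fun i _ => by rw [smul_smul])
  rwa [Convex.convexHull_eq (convex_convexHull ℝ _)] at key

end RescaleAux


/-- Lemma 2.2(ii): for a full row rank matrix `A`, `0 < ε ≤ 1/(11 m)`, a unit vector `v`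
with `â_jᵀ v ≥ -ε` for all `j`, and `A' = (I + vvᵀ)A`, the Lebesgue volume satisfies
`vol(P_{A'}) ≥ (3/2)·vol(P_A)`. -/
theorem rescale_volume_PA
    {m n : ℕ} (A : Matrix (Fin m) (Fin n) ℝ) (hcols : ∀ j, mcol A j ≠ 0)
    (hrk : A.rank = m)
    (ε : ℝ) (hε : 0 < ε) (hεr : ε ≤ 1 / (11 * (m : ℝ)))
    (v : Fin m → ℝ) (hv : norm2 v = 1)
    (hang : ∀ j, -ε ≤ dotp (nml (mcol A j)) v) :
    (3 / 2 : ℝ≥0∞) * volume (PA A) ≤ volume (PA ((1 + vecMulVec v v) * A)) := by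
  classical
  rcases Nat.eq_zero_or_pos m with hm0 | hm
  · exfalso; subst hm0; simp at hεr; linarith
  rcases eq_or_ne (volume (PA A)) 0 with h0 | h0
  · rw [h0, mul_zero]; exact zero_le
  set M : Matrix (Fin m) (Fin m) ℝ := 1 + vecMulVec v v with hMdef
  have hm0R : (0 : ℝ) < m := by exact_mod_cast hm
  have hc : (0 : ℝ) < 1 + 3 * ε := by linarith
  -- basic algebraic facts about `M`
  have hvv : dotp v v = 1 := by rw [← RescaleAux.sq_norm2, hv, one_pow]
  have hMu : ∀ u : Fin m → ℝ, M.mulVec u = u + dotp v u • v := by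
    intro u; funext i
    rw [hMdef, Matrix.add_mulVec, Matrix.one_mulVec]
    simp only [Pi.add_apply, Pi.smul_apply, smul_eq_mul]
    congr 1
    have h1 : (vecMulVec v v).mulVec u i = ∑ j, v i * v j * u j := by
      simp [Matrix.mulVec, dotProduct, vecMulVec]
    rw [h1, dotp, Finset.sum_mul]
    exact Finset.sum_congr rfl fun k _ => by ring
  have hquad : ∀ u : Fin m → ℝ,
      dotp (M.mulVec u) (M.mulVec u) = dotp u u + 3 * (dotp v u) ^ 2 := by
    intro u
    rw [hMu]
    simp only [RescaleAux.dotp_add_left, RescaleAux.dotp_add_right, RescaleAux.dotp_smul_left,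
      RescaleAux.dotp_smul_right, hvv]
    rw [RescaleAux.dotp_comm u v]
    ring
  have hp0 : ∀ j, nml (mcol A j) ≠ 0 := fun j => RescaleAux.nml_ne_zero (hcols j)
  have hpunit : ∀ j, dotp (nml (mcol A j)) (nml (mcol A j)) = 1 :=
    fun j => RescaleAux.dotp_nml_self (hcols j)
  have hMp0 : ∀ j, M.mulVec (nml (mcol A j)) ≠ 0 := by
    intro j hzero
    have h1 := hquad (nml (mcol A j))
    rw [hzero] at h1
    have h2 : dotp (0 : Fin m → ℝ) (0 : Fin m → ℝ) = 0 := by simp [dotp]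
    rw [h2, hpunit j] at h1
    nlinarith [sq_nonneg (dotp v (nml (mcol A j)))]
  have hlamsq : ∀ j, (norm2 (M.mulVec (nml (mcol A j)))) ^ 2
      = 1 + 3 * (dotp v (nml (mcol A j))) ^ 2 := by
    intro j
    rw [RescaleAux.sq_norm2, hquad, hpunit]
  have hlam_pos : ∀ j, 0 < norm2 (M.mulVec (nml (mcol A j))) :=
    fun j => RescaleAux.norm2_pos (hMp0 j)
  have ht1 : ∀ j, (dotp v (nml (mcol A j))) ^ 2 ≤ 1 := by
    intro j
    have h1 := RescaleAux.cauchy_schwarz v (nml (mcol A j))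
    rw [hvv, hpunit] at h1
    linarith
  have hlam1 : ∀ j, 1 ≤ norm2 (M.mulVec (nml (mcol A j))) := by
    intro j
    nlinarith [hlamsq j, hlam_pos j, sq_nonneg (dotp v (nml (mcol A j)))]
  have hlamle : ∀ j, norm2 (M.mulVec (nml (mcol A j))) ≤ 1 + |dotp v (nml (mcol A j))| := by
    intro j
    have habs1 : |dotp v (nml (mcol A j))| ≤ 1 := by
      nlinarith [ht1 j, sq_abs (dotp v (nml (mcol A j))), abs_nonneg (dotp v (nml (mcol A j)))]
    nlinarith [hlamsq j, hlam_pos j, abs_nonneg (dotp v (nml (mcol A j))),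
      sq_abs (dotp v (nml (mcol A j)))]
  have hcolmul : ∀ j, mcol (M * A) j = M.mulVec (mcol A j) := by
    intro j; funext i
    simp [mcol, Matrix.mul_apply, Matrix.mulVec, dotProduct]
  have hMp : ∀ j, M.mulVec (nml (mcol A j))
      = norm2 (M.mulVec (nml (mcol A j))) • nml (mcol (M * A) j) := by
    intro j
    have hq : nml (mcol (M * A) j) = nml (M.mulVec (nml (mcol A j))) := by
      rw [hcolmul j]
      conv_lhs => rw [RescaleAux.eq_norm2_smul_nml (hcols j)]
      rw [Matrix.mulVec_smul, RescaleAux.nml_smul (RescaleAux.norm2_pos (hcols j))]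
    rw [hq]
    exact RescaleAux.eq_norm2_smul_nml (hMp0 j)
  have ht : ∀ j, -ε ≤ dotp v (nml (mcol A j)) := by
    intro j; rw [RescaleAux.dotp_comm]; exact hang j
  -- zero is in the hull
  have hne : (PA A).Nonempty := by
    by_contra hemp
    rw [Set.not_nonempty_iff_eq_empty] at hemp
    rw [hemp, measure_empty] at h0
    exact h0 rfl
  have hPAzero : (0 : Fin m → ℝ) ∈ convexHull ℝ (Set.range fun j => nml (mcol A j)) := by
    obtain ⟨a, ha⟩ := hne
    simp only [PA, Set.mem_inter_iff, Set.mem_neg] at ha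
    have hhalf : (0 : ℝ) ≤ 1 / 2 := by norm_num
    have hcomb : (1 / 2 : ℝ) • a + (1 / 2 : ℝ) • (-a)
        ∈ convexHull ℝ (Set.range fun j => nml (mcol A j)) :=
      (convex_convexHull ℝ (Set.range fun j => nml (mcol A j)))
        ha.1 ha.2 hhalf hhalf (by norm_num)
    have heq : (1 / 2 : ℝ) • a + (1 / 2 : ℝ) • (-a) = 0 := by
      rw [smul_neg]; exact add_neg_cancel _
    rwa [heq] at hcomb
  have hq0 : (0 : Fin m → ℝ) ∈ convexHull ℝ (Set.range fun j => nml (mcol (M * A) j)) :=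
    RescaleAux.zero_mem_q hMp hlam1 hPAzero
  -- lower bound on `dotp v` over the hull
  have hbound : ∀ z ∈ convexHull ℝ (Set.range fun j => nml (mcol A j)), -ε ≤ dotp v z := by
    intro z hz
    obtain ⟨ι, hι, w, j, hw0, hw1, hcomb⟩ := RescaleAux.exists_combo hz
    have hz' : dotp v z = ∑ i, w i * dotp v (nml (mcol A (j i))) := by
      rw [← hcomb, RescaleAux.dotp_sum_right]
      exact Finset.sum_congr rfl fun i _ => RescaleAux.dotp_smul_right _ _ _
    rw [hz']
    calc -ε = ∑ i, w i * (-ε) := by rw [← Finset.sum_mul, hw1, one_mul]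
      _ ≤ ∑ i, w i * dotp v (nml (mcol A (j i))) :=
        Finset.sum_le_sum fun i _ => mul_le_mul_of_nonneg_left (ht (j i)) (hw0 i)
  -- the key inclusion
  have hsub : (1 + 3 * ε)⁻¹ • (Matrix.toLin' M '' PA A) ⊆ PA (M * A) := by
    intro y hy
    obtain ⟨y', hy', rfl⟩ := Set.mem_smul_set.1 hy
    obtain ⟨x, hxPA, rfl⟩ := hy'
    simp only [PA, Set.mem_inter_iff, Set.mem_neg] at hxPA ⊢
    obtain ⟨hx1, hx2⟩ := hxPA
    rw [Matrix.toLin'_apply]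
    constructor
    · refine RescaleAux.core_mem hε hMp (fun j => (hlam_pos j).le) hlamle ht hq0 hx1 ?_
      have h1 := hbound _ hx2
      rw [RescaleAux.dotp_neg_right] at h1
      linarith
    · have hgoal : -((1 + 3 * ε)⁻¹ • M.mulVec x) = (1 + 3 * ε)⁻¹ • M.mulVec (-x) := by
        rw [Matrix.mulVec_neg, smul_neg]
      rw [hgoal]
      refine RescaleAux.core_mem hε hMp (fun j => (hlam_pos j).le) hlamle ht hq0 hx2 ?_
      have h1 := hbound _ hx1
      rw [RescaleAux.dotp_neg_right]
      linarith
  -- determinant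
  have hdet : M.det = 2 := by
    rw [hMdef, Matrix.vecMulVec_eq Unit, Matrix.det_one_add_replicateCol_mul_replicateRow]
    rw [show v ⬝ᵥ v = dotp v v from rfl, hvv]
    norm_num
  have hdetlin : LinearMap.det (Matrix.toLin' M) = 2 := by rw [LinearMap.det_toLin', hdet]
  -- numerics
  have hεm : ε * m ≤ 1 / 11 := by
    have h1 := (le_div_iff₀ (by positivity : (0 : ℝ) < 11 * m)).1 hεr
    nlinarith
  have hpow : (1 + 3 * ε) ^ m ≤ 4 / 3 := by
    have h1 : (1 + 3 * ε) ^ m ≤ Real.exp (3 * ε) ^ m :=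
      pow_le_pow_left₀ (by linarith) (by have := Real.add_one_le_exp (3 * ε); linarith) m
    have h2 : Real.exp (3 * ε) ^ m = Real.exp (m * (3 * ε)) := (Real.exp_nat_mul _ m).symm
    have h3 : Real.exp ((m : ℝ) * (3 * ε)) ≤ Real.exp (3 / 11) := by
      apply Real.exp_le_exp.2
      nlinarith
    have h4 : Real.exp (3 / 11) ≤ 4 / 3 := by
      have e11 : Real.exp (3 / 11) ^ (11 : ℕ) = Real.exp 3 := by
        rw [← Real.exp_nat_mul]; norm_num
      have he3 : Real.exp 3 ≤ (4 / 3 : ℝ) ^ (11 : ℕ) := by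
        have h1' : Real.exp 3 = Real.exp 1 ^ (3 : ℕ) := by rw [← Real.exp_nat_mul]; norm_num
        rw [h1']
        calc Real.exp 1 ^ (3 : ℕ) ≤ (2.7182818286 : ℝ) ^ (3 : ℕ) :=
              pow_le_pow_left₀ (Real.exp_pos 1).le Real.exp_one_lt_d9.le 3
          _ ≤ (4 / 3 : ℝ) ^ (11 : ℕ) := by norm_num
      exact le_of_pow_le_pow_left₀ (n := 11) (by norm_num) (by norm_num) (by rw [e11]; exact he3)
    calc (1 + 3 * ε) ^ m ≤ Real.exp (3 * ε) ^ m := h1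
      _ = Real.exp ((m : ℝ) * (3 * ε)) := h2
      _ ≤ Real.exp (3 / 11) := h3
      _ ≤ 4 / 3 := h4
  have hcoeffR : (3 / 2 : ℝ) ≤ ((1 + 3 * ε)⁻¹) ^ m * 2 := by
    have hpm : (0 : ℝ) < (1 + 3 * ε) ^ m := by positivity
    rw [inv_pow]
    have h1 : ((1 + 3 * ε) ^ m)⁻¹ * ((1 + 3 * ε) ^ m) = 1 := inv_mul_cancel₀ (ne_of_gt hpm)
    have h2 : (0 : ℝ) < ((1 + 3 * ε) ^ m)⁻¹ := by positivity
    nlinarith [hpow]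
  -- final volume computation
  calc (3 / 2 : ℝ≥0∞) * volume (PA A)
      ≤ ENNReal.ofReal (((1 + 3 * ε)⁻¹) ^ m * 2) * volume (PA A) := by
        apply mul_le_mul_left
        rw [show (3 / 2 : ℝ≥0∞) = ENNReal.ofReal (3 / 2) by
          rw [ENNReal.ofReal_div_of_pos (by norm_num)]
          norm_num]
        exact ENNReal.ofReal_le_ofReal hcoeffR
    _ = volume ((1 + 3 * ε)⁻¹ • (Matrix.toLin' M '' PA A)) := by
        rw [Measure.addHaar_smul, Measure.addHaar_image_linearMap, hdetlin]
        rw [Module.finrank_fin_fun (R := ℝ)]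
        rw [abs_of_nonneg (by positivity : (0 : ℝ) ≤ ((1 + 3 * ε)⁻¹) ^ m),
          abs_of_nonneg (by norm_num : (0 : ℝ) ≤ (2 : ℝ))]
        rw [← mul_assoc, ← ENNReal.ofReal_mul (by positivity)]
    _ ≤ volume (PA (M * A)) := measure_mono hsub
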